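/- arXiv:1110.0215 — 5 statements merged into one kernel-verified Lean document; each statement's English description precedes it below -/
import Mathlib

section
/- Fix h₁ > h₂ > 0 and P > 0. For P₁ ∈ [0, P], let r₁(P₁) = γ(h₁²P₁), r₂(P₁) = γ(h₂²P) − γ(h₂²P₁), g(P₁) = (1/h₁² + P₁)/(1/h₂² + P₁), and define 1/b(P₁) = r₂(P₁) + g(P₁)·r₁(P₁). Then the derivative of 1/b with respect to P₁ equals (h₁² − h₂²)·h₁²·h₂²/(h₁² + h₁²h₂²P₁)² · γ(h₁²P₁), which is nonnegative on [0, P]; hence 1/b is monotonically increasing on [0, P] with minimum value γ(h₂²P) at P₁ = 0. -/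
noncomputable def gam (x : ℝ) : ℝ := (1/2) * Real.logb 2 (1 + x)

lemma gam_nonneg {x : ℝ} (hx : 0 ≤ x) : 0 ≤ gam x := by
  unfold gam
  have : (1:ℝ) ≤ 1 + x := by linarith
  have := Real.logb_nonneg (by norm_num : (1:ℝ) < 2) this
  linarith

lemma hasDerivAt_gam_comp (c t : ℝ) (ht : 0 < 1 + c * t) :
    HasDerivAt (fun s => gam (c * s)) (c / (2 * Real.log 2 * (1 + c * t))) t := by
  have hL : Real.log 2 ≠ 0 := ne_of_gt (Real.log_pos (by norm_num))
  have hinner : HasDerivAt (fun s : ℝ => 1 + c * s) c t := by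
    simpa using ((hasDerivAt_id t).const_mul c).const_add 1
  have hlog : HasDerivAt (fun s : ℝ => Real.log (1 + c * s)) ((1 + c * t)⁻¹ * c) t :=
    by have := (Real.hasDerivAt_log (ne_of_gt ht)).comp t hinner; exact this
  have : HasDerivAt (fun s : ℝ => (1/2) * (Real.log (1 + c * s) / Real.log 2))
      ((1/2) * ((1 + c * t)⁻¹ * c / Real.log 2)) t := (hlog.div_const _).const_mul _
  have heq : (fun s : ℝ => (1/2) * (Real.log (1 + c * s) / Real.log 2))
      = fun s => gam (c * s) := by
    funext s; simp [gam, Real.logb]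
  rw [heq] at this
  convert this using 1
  have hL' : 0 < Real.log 2 := Real.log_pos (by norm_num)
  have hX : (2*Real.log 2*(1+c*t)) ≠ 0 := by positivity
  rw [div_eq_iff hX]
  field_simp

lemma hasDerivAt_f (h₁ h₂ P t : ℝ) (hh₂ : 0 < h₂) (hh : h₂ < h₁) (ht : 0 ≤ t) :
    HasDerivAt (fun s : ℝ =>
        (gam (h₂^2 * P) - gam (h₂^2 * s)) +
          ((1 / h₁^2 + s) / (1 / h₂^2 + s)) * gam (h₁^2 * s))
      ((h₁^2 - h₂^2) * h₁^2 * h₂^2 / (h₁^2 + h₁^2 * h₂^2 * t)^2 * gam (h₁^2 * t)) t := by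
  have hh₁ : 0 < h₁ := lt_trans hh₂ hh
  have hc₁ : 0 < h₁^2 := by positivity
  have hc₂ : 0 < h₂^2 := by positivity
  have h1 : 0 < 1 + h₁^2 * t := by nlinarith
  have h2 : 0 < 1 + h₂^2 * t := by nlinarith
  have hv : (0:ℝ) < 1 / h₂^2 + t := by positivity
  have hA := hasDerivAt_gam_comp (h₂^2) t h2
  have hC := hasDerivAt_gam_comp (h₁^2) t h1
  have hu : HasDerivAt (fun s : ℝ => 1 / h₁^2 + s) 1 t := (hasDerivAt_id t).const_add _
  have hv' : HasDerivAt (fun s : ℝ => 1 / h₂^2 + s) 1 t := (hasDerivAt_id t).const_add _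
  have hB : HasDerivAt (fun s : ℝ => (1 / h₁^2 + s) / (1 / h₂^2 + s))
      ((1 * (1 / h₂^2 + t) - (1 / h₁^2 + t) * 1) / (1 / h₂^2 + t)^2) t :=
    hu.div hv' (ne_of_gt hv)
  have hfull := ((hasDerivAt_const t (gam (h₂^2 * P))).sub hA).add (hB.mul hC)
  refine hfull.congr_deriv ?_
  have hL : Real.log 2 ≠ 0 := ne_of_gt (Real.log_pos (by norm_num))
  have hden : h₁^2 + h₁^2 * h₂^2 * t ≠ 0 := by positivity
  field_simp
  ring

theorem one_over_b_increasing (h₁ h₂ P : ℝ)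
    (hh₂ : 0 < h₂) (hh : h₂ < h₁) (hP : 0 < P) :
    (∀ t ∈ Set.Icc (0 : ℝ) P,
        deriv (fun s : ℝ =>
            (gam (h₂^2 * P) - gam (h₂^2 * s)) +
              ((1 / h₁^2 + s) / (1 / h₂^2 + s)) * gam (h₁^2 * s)) t
          = (h₁^2 - h₂^2) * h₁^2 * h₂^2 / (h₁^2 + h₁^2 * h₂^2 * t)^2 * gam (h₁^2 * t) ∧
        0 ≤ deriv (fun s : ℝ =>
            (gam (h₂^2 * P) - gam (h₂^2 * s)) +
              ((1 / h₁^2 + s) / (1 / h₂^2 + s)) * gam (h₁^2 * s)) t) ∧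
    MonotoneOn (fun s : ℝ =>
        (gam (h₂^2 * P) - gam (h₂^2 * s)) +
          ((1 / h₁^2 + s) / (1 / h₂^2 + s)) * gam (h₁^2 * s)) (Set.Icc 0 P) ∧
    ((gam (h₂^2 * P) - gam (h₂^2 * 0)) +
        ((1 / h₁^2 + 0) / (1 / h₂^2 + 0)) * gam (h₁^2 * 0) = gam (h₂^2 * P)) ∧
    (∀ t ∈ Set.Icc (0 : ℝ) P,
      gam (h₂^2 * P) ≤
        (gam (h₂^2 * P) - gam (h₂^2 * t)) +
          ((1 / h₁^2 + t) / (1 / h₂^2 + t)) * gam (h₁^2 * t)) := by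
  have hh₁ : 0 < h₁ := lt_trans hh₂ hh
  set f := fun s : ℝ =>
      (gam (h₂^2 * P) - gam (h₂^2 * s)) +
        ((1 / h₁^2 + s) / (1 / h₂^2 + s)) * gam (h₁^2 * s) with hf
  have hderiv : ∀ t ∈ Set.Icc (0:ℝ) P, deriv f t
      = (h₁^2 - h₂^2) * h₁^2 * h₂^2 / (h₁^2 + h₁^2 * h₂^2 * t)^2 * gam (h₁^2 * t) := by
    intro t ht
    exact (hasDerivAt_f h₁ h₂ P t hh₂ hh ht.1).deriv
  have hnn : ∀ t ∈ Set.Icc (0:ℝ) P, 0 ≤ deriv f t := by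
    intro t ht
    rw [hderiv t ht]
    have : 0 ≤ gam (h₁^2 * t) := gam_nonneg (by nlinarith [ht.1, sq_nonneg h₁])
    have hc : 0 ≤ (h₁^2 - h₂^2) * h₁^2 * h₂^2 / (h₁^2 + h₁^2 * h₂^2 * t)^2 := by
      apply div_nonneg _ (sq_nonneg _)
      have h12 : h₂^2 < h₁^2 := by nlinarith
      have := mul_pos (mul_pos (sub_pos.mpr h12) (pow_pos hh₁ 2)) (pow_pos hh₂ 2)
      linarith
    exact mul_nonneg hc this
  have hmono : MonotoneOn f (Set.Icc 0 P) := by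
    apply monotoneOn_of_deriv_nonneg (convex_Icc 0 P)
    · intro t ht
      exact (hasDerivAt_f h₁ h₂ P t hh₂ hh ht.1).continuousAt.continuousWithinAt
    · intro t ht
      rw [interior_Icc] at ht
      exact (hasDerivAt_f h₁ h₂ P t hh₂ hh (le_of_lt ht.1)).differentiableAt.differentiableWithinAt
    · intro t ht
      rw [interior_Icc] at ht
      exact hnn t ⟨le_of_lt ht.1, le_of_lt ht.2⟩
  have hzero : f 0 = gam (h₂^2 * P) := by
    simp [hf, gam]
  refine ⟨fun t ht => ⟨hderiv t ht, hnn t ht⟩, hmono, hzero, fun t ht => ?_⟩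
  have := hmono (Set.mem_Icc.mpr ⟨le_refl 0, le_of_lt hP⟩) ht ht.1
  rw [hzero] at this
  exact this
end

section
/- Fix h₁ > h₂ > 0 and P > 0. For P₁ ∈ [0, P], define g(P₁), r₁(P₁), r₂(P₁) as before and 1/a(P₁) = r₂(P₁)/g(P₁) + r₁(P₁). Then the derivative of 1/a with respect to P₁ equals −(h₁² − h₂²)·h₁²·h₂²/(h₂² + h₁²h₂²P₁)² · (γ(h₂²P) − γ(h₂²P₁)), which is nonpositive on [0, P]; hence 1/a is monotonically decreasing on [0, P] with minimum value γ(h₁²P) at P₁ = P. -/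
lemma key_deriv (h₁ h₂ P : ℝ) (hh₂ : 0 < h₂) (hh : h₂ < h₁) (t : ℝ) (ht : 0 ≤ t) :
    HasDerivAt (fun s : ℝ =>
        (gam (h₂^2 * P) - gam (h₂^2 * s)) / ((1 / h₁^2 + s) / (1 / h₂^2 + s)) +
          gam (h₁^2 * s))
      (-((h₁^2 - h₂^2) * h₁^2 * h₂^2 / (h₂^2 + h₁^2 * h₂^2 * t)^2) *
          (gam (h₂^2 * P) - gam (h₂^2 * t))) t := by
  have hh₁ : 0 < h₁ := hh₂.trans hh
  have hA : (0:ℝ) < h₁^2 := by positivity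
  have hB : (0:ℝ) < h₂^2 := by positivity
  have h1t : (0:ℝ) < 1 + h₂^2 * t := by positivity
  have h2t : (0:ℝ) < 1 + h₁^2 * t := by positivity
  have hiA : (0:ℝ) < 1/h₁^2 + t := by positivity
  have hiB : (0:ℝ) < 1/h₂^2 + t := by positivity
  have e1 : (fun s : ℝ =>
        (gam (h₂^2 * P) - gam (h₂^2 * s)) / ((1 / h₁^2 + s) / (1 / h₂^2 + s)) +
          gam (h₁^2 * s))
      = fun s : ℝ =>
        (gam (h₂^2 * P) - gam (h₂^2 * s)) * (1 / h₂^2 + s) / (1 / h₁^2 + s) +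
          gam (h₁^2 * s) := by
    funext s; rw [div_div_eq_mul_div]
  rw [e1]
  have hlog2 : HasDerivAt (fun s : ℝ => Real.log (1 + h₂^2 * s)) (h₂^2 / (1 + h₂^2 * t)) t := by
    have h := (((hasDerivAt_id t).const_mul (h₂^2)).const_add 1).log h1t.ne'
    simpa using h
  have hlog1 : HasDerivAt (fun s : ℝ => Real.log (1 + h₁^2 * s)) (h₁^2 / (1 + h₁^2 * t)) t := by
    have h := (((hasDerivAt_id t).const_mul (h₁^2)).const_add 1).log h2t.ne'
    simpa using h
  have hg2 : HasDerivAt (fun s : ℝ => gam (h₂^2 * s))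
      ((1/2) * (h₂^2 / (1 + h₂^2 * t) / Real.log 2)) t := by
    simp only [gam, Real.logb]
    exact (hlog2.div_const _).const_mul _
  have hg1 : HasDerivAt (fun s : ℝ => gam (h₁^2 * s))
      ((1/2) * (h₁^2 / (1 + h₁^2 * t) / Real.log 2)) t := by
    simp only [gam, Real.logb]
    exact (hlog1.div_const _).const_mul _
  have hu : HasDerivAt (fun s : ℝ => gam (h₂^2 * P) - gam (h₂^2 * s))
      (0 - (1/2) * (h₂^2 / (1 + h₂^2 * t) / Real.log 2)) t :=
    (hasDerivAt_const t _).sub hg2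
  have hvB : HasDerivAt (fun s : ℝ => 1 / h₂^2 + s) 1 t := by
    exact (hasDerivAt_id t).const_add (1/h₂^2)
  have hvA : HasDerivAt (fun s : ℝ => 1 / h₁^2 + s) 1 t := by
    exact (hasDerivAt_id t).const_add (1/h₁^2)
  have hnum := hu.mul hvB
  have hquot := hnum.div hvA hiA.ne'
  have hfull := hquot.add hg1
  refine hfull.congr_deriv ?_
  have hlog2pos : (0:ℝ) < Real.log 2 := Real.log_pos (by norm_num)
  have hd : (0:ℝ) < h₂^2 + h₁^2 * h₂^2 * t := by positivity
  set u := gam (h₂^2 * P) - gam (h₂^2 * t) with hudef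
  simp only [Pi.mul_apply]
  field_simp
  ring

lemma gam_mono {a b : ℝ} (ha : 0 ≤ a) (hab : a ≤ b) : gam a ≤ gam b := by
  unfold gam
  gcongr
  all_goals first | linarith | norm_num

theorem one_over_a_decreasing (h₁ h₂ P : ℝ)
    (hh₂ : 0 < h₂) (hh : h₂ < h₁) (hP : 0 < P) :
    (∀ t ∈ Set.Icc (0 : ℝ) P,
        deriv (fun s : ℝ =>
            (gam (h₂^2 * P) - gam (h₂^2 * s)) / ((1 / h₁^2 + s) / (1 / h₂^2 + s)) +
              gam (h₁^2 * s)) t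
          = -((h₁^2 - h₂^2) * h₁^2 * h₂^2 / (h₂^2 + h₁^2 * h₂^2 * t)^2) *
              (gam (h₂^2 * P) - gam (h₂^2 * t)) ∧
        deriv (fun s : ℝ =>
            (gam (h₂^2 * P) - gam (h₂^2 * s)) / ((1 / h₁^2 + s) / (1 / h₂^2 + s)) +
              gam (h₁^2 * s)) t ≤ 0) ∧
    AntitoneOn (fun s : ℝ =>
        (gam (h₂^2 * P) - gam (h₂^2 * s)) / ((1 / h₁^2 + s) / (1 / h₂^2 + s)) +
          gam (h₁^2 * s)) (Set.Icc 0 P) ∧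
    ((gam (h₂^2 * P) - gam (h₂^2 * P)) / ((1 / h₁^2 + P) / (1 / h₂^2 + P)) +
        gam (h₁^2 * P) = gam (h₁^2 * P)) ∧
    (∀ t ∈ Set.Icc (0 : ℝ) P,
      gam (h₁^2 * P) ≤
        (gam (h₂^2 * P) - gam (h₂^2 * t)) / ((1 / h₁^2 + t) / (1 / h₂^2 + t)) +
          gam (h₁^2 * t)) := by
  have hh₁ : 0 < h₁ := hh₂.trans hh
  have hAB : 0 < h₁^2 - h₂^2 := by nlinarith
  set f : ℝ → ℝ := fun s : ℝ =>
      (gam (h₂^2 * P) - gam (h₂^2 * s)) / ((1 / h₁^2 + s) / (1 / h₂^2 + s)) +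
        gam (h₁^2 * s) with hf
  have hB : (0:ℝ) < h₂^2 := by positivity
  have hunn : ∀ t ∈ Set.Icc (0:ℝ) P, 0 ≤ gam (h₂^2 * P) - gam (h₂^2 * t) := by
    intro t ht
    have : gam (h₂^2 * t) ≤ gam (h₂^2 * P) := by
      apply gam_mono (mul_nonneg hB.le ht.1)
      nlinarith [ht.1, ht.2]
    linarith
  have hder : ∀ t ∈ Set.Icc (0:ℝ) P,
      deriv f t = -((h₁^2 - h₂^2) * h₁^2 * h₂^2 / (h₂^2 + h₁^2 * h₂^2 * t)^2) *
        (gam (h₂^2 * P) - gam (h₂^2 * t)) := by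
    intro t ht
    exact (key_deriv h₁ h₂ P hh₂ hh t ht.1).deriv
  have hnonpos : ∀ t ∈ Set.Icc (0:ℝ) P, deriv f t ≤ 0 := by
    intro t ht
    rw [hder t ht]
    have ht0 := ht.1
    have h1 : (0:ℝ) < h₁^2 := by positivity
    have hC : 0 ≤ (h₁^2 - h₂^2) * h₁^2 * h₂^2 / (h₂^2 + h₁^2 * h₂^2 * t)^2 :=
      div_nonneg (mul_nonneg (mul_nonneg hAB.le h1.le) hB.le) (sq_nonneg _)
    have := mul_nonneg hC (hunn t ht)
    linarith
  have hanti : AntitoneOn f (Set.Icc 0 P) := by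
    apply antitoneOn_of_deriv_nonpos (convex_Icc 0 P)
    · intro t ht
      exact (key_deriv h₁ h₂ P hh₂ hh t ht.1).differentiableAt.continuousAt.continuousWithinAt
    · intro t ht
      rw [interior_Icc] at ht
      exact (key_deriv h₁ h₂ P hh₂ hh t ht.1.le).differentiableAt.differentiableWithinAt
    · intro t ht
      rw [interior_Icc] at ht
      exact hnonpos t ⟨ht.1.le, ht.2.le⟩
  have hfP : f P = gam (h₁^2 * P) := by
    simp [hf]
  refine ⟨fun t ht => ⟨hder t ht, hnonpos t ht⟩, hanti, hfP, fun t ht => ?_⟩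
  have := hanti ht (Set.right_mem_Icc.mpr hP.le) ht.2
  rw [hfP] at this
  exact this
end

section
/- Fix h₁ > h₂ > 0 and P > 0, and let P₁ ∈ (0, P). With a(P₁), b(P₁) as defined from the tangent line to the Gaussian BC capacity region boundary at P₁, and R₁* = γ(h₁²P), R₂* = γ(h₂²P), the quantities w₁ = 1 − b(P₁)·R₂* and w₂ = a(P₁)·R₁* satisfy w₁ ∈ [0, 1) and w₂ ∈ (0, 1]. -/
lemma mono1 {v u : ℝ} (hv : 0 < v) (hvu : v ≤ u) :
    v * Real.log (1+u) ≤ u * Real.log (1+v) := by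
  have hu : 0 < u := hv.trans_le hvu
  have h1 : (1:ℝ) + u ≤ (1+v) ^ (u/v) := by
    have := one_add_mul_self_le_rpow_one_add (by linarith : (-1:ℝ) ≤ v)
      ((one_le_div hv).mpr hvu)
    rwa [div_mul_cancel₀ _ hv.ne'] at this
  have h2 : Real.log (1+u) ≤ Real.log ((1+v) ^ (u/v)) :=
    Real.log_le_log (by linarith) h1
  rw [Real.log_rpow (by linarith)] at h2
  have := mul_le_mul_of_nonneg_left h2 hv.le
  calc v * Real.log (1+u) ≤ v * (u / v * Real.log (1+v)) := this
    _ = u * Real.log (1+v) := by field_simp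

lemma mono2 {v u : ℝ} (hv : 0 < v) (hvu : v ≤ u) :
    u * ((1+v) * Real.log (1+v)) ≤ v * ((1+u) * Real.log (1+u)) := by
  have hu : 0 < u := hv.trans_le hvu
  set ψ : ℝ → ℝ := fun x => (1+x) * Real.log (1+x) / x with hψ
  have hd : ∀ x : ℝ, 0 < x → HasDerivAt ψ ((x - Real.log (1+x))/x^2) x := by
    intro x hx
    have h1 : HasDerivAt (fun y : ℝ => 1+y) 1 x := by
      simpa using (hasDerivAt_id x).const_add 1
    have hlog : HasDerivAt (fun y : ℝ => Real.log (1+y)) (1/(1+x)) x := by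
      have := (Real.hasDerivAt_log (by linarith : (1:ℝ)+x ≠ 0)).comp x h1
      rw [one_div, ← mul_one (1+x)⁻¹]
      exact this
    have hnum : HasDerivAt (fun y : ℝ => (1+y) * Real.log (1+y))
        (Real.log (1+x) + 1) x := by
      have := h1.mul hlog
      refine this.congr_deriv ?_
      rw [mul_one_div_cancel (by linarith : (1:ℝ)+x ≠ 0)]
      ring
    have := hnum.div (hasDerivAt_id x) hx.ne'
    refine this.congr_deriv ?_
    simp only [id_eq]
    ring
  have hmono : MonotoneOn ψ (Set.Ioi 0) := by
    apply monotoneOn_of_deriv_nonneg (convex_Ioi 0)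
    · intro x hx
      exact ((hd x hx).continuousAt).continuousWithinAt
    · intro x hx
      rw [interior_Ioi] at hx
      exact ((hd x hx).differentiableAt).differentiableWithinAt
    · intro x hx
      rw [interior_Ioi] at hx
      replace hx : 0 < x := hx
      rw [(hd x hx).deriv]
      have h2 : Real.log (1+x) ≤ x := by
        have := Real.log_le_sub_one_of_pos (by linarith : (0:ℝ) < 1+x)
        linarith
      exact div_nonneg (by linarith) (sq_nonneg x)
  have h := hmono (Set.mem_Ioi.mpr hv) (Set.mem_Ioi.mpr hu) hvu
  simp only [hψ] at h
  rw [div_le_div_iff₀ hv hu] at h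
  nlinarith [h]

set_option maxHeartbeats 1000000 in
theorem weights_in_unit_interval (h₁ h₂ P P₁ : ℝ)
    (hh₂ : 0 < h₂) (hh : h₂ < h₁) (hP : 0 < P) (hP₁ : P₁ ∈ Set.Ioo (0 : ℝ) P) :
    let r₁ := gam (h₁^2 * P₁)
    let r₂ := gam (h₂^2 * P) - gam (h₂^2 * P₁)
    let g := (1 / h₁^2 + P₁) / (1 / h₂^2 + P₁)
    let a := g / (r₂ + g * r₁)
    let b := 1 / (r₂ + g * r₁)
    let R₁s := gam (h₁^2 * P)
    let R₂s := gam (h₂^2 * P)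
    (0 ≤ 1 - b * R₂s ∧ 1 - b * R₂s < 1) ∧ (0 < a * R₁s ∧ a * R₁s ≤ 1) := by
  obtain ⟨hP₁0, hP₁P⟩ := hP₁
  intro r₁ r₂ g a b R₁s R₂s
  have hbdef : b = 1/(r₂ + g*r₁) := rfl
  have hadef : a = g/(r₂ + g*r₁) := rfl
  have hgdef : g = (1 / h₁^2 + P₁) / (1 / h₂^2 + P₁) := rfl
  have hr₁def : r₁ = gam (h₁^2 * P₁) := rfl
  have hr₂def : r₂ = gam (h₂^2 * P) - gam (h₂^2 * P₁) := rfl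
  have hR₁sdef : R₁s = gam (h₁^2 * P) := rfl
  have hR₂sdef : R₂s = gam (h₂^2 * P) := rfl
  clear_value r₁ r₂ g a b R₁s R₂s
  have hh₁ : 0 < h₁ := hh₂.trans hh
  have h1sq : 0 < h₁^2 := by positivity
  have h2sq : 0 < h₂^2 := by positivity
  have hsqle : h₂^2 ≤ h₁^2 := by
    have := pow_le_pow_left₀ hh₂.le hh.le 2
    simpa using this
  have hm1 : 0 < h₁^2*P₁ := mul_pos h1sq hP₁0
  have hm2 : 0 < h₂^2*P₁ := mul_pos h2sq hP₁0
  have hm3 : 0 < h₁^2*P := mul_pos h1sq hP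
  have hm4 : 0 < h₂^2*P := mul_pos h2sq hP
  have hm5 : h₂^2*P₁ < h₂^2*P := (mul_lt_mul_iff_right₀ h2sq).mpr hP₁P
  have hL : 0 < Real.log 2 := Real.log_pos (by norm_num)
  set L := Real.log 2 with hLdef
  have gam_eq : ∀ x : ℝ, gam x = Real.log (1+x) / (2*L) := by
    intro x
    simp only [gam, Real.logb, hLdef]
    ring
  set A := Real.log (1 + h₁^2*P₁) with hAdef
  set B := Real.log (1 + h₂^2*P₁) with hBdef
  set C := Real.log (1 + h₁^2*P) with hCdef
  set E := Real.log (1 + h₂^2*P) with hEdef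
  have hA : 0 < A := Real.log_pos (by linarith)
  have hB : 0 < B := Real.log_pos (by linarith)
  have hC : 0 < C := Real.log_pos (by linarith)
  have hE : 0 < E := Real.log_pos (by linarith)
  have hBE : B < E := Real.log_lt_log (by linarith) (by linarith)
  have hg0 : 0 < g := by
    rw [hgdef]; positivity
  have hgid : g = (h₂^2*(1+h₁^2*P₁))/(h₁^2*(1+h₂^2*P₁)) := by
    rw [hgdef]
    rw [div_eq_div_iff (by positivity) (by positivity)]
    field_simp
  -- key inequality 1 : B ≤ g * A
  have k1 : B * (h₁^2*(1+h₂^2*P₁)) ≤ h₂^2*(1+h₁^2*P₁) * A := by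
    have m := mono2 (v := h₂^2*P₁) (u := h₁^2*P₁) (by positivity) (mul_le_mul_of_nonneg_right hsqle hP₁0.le)
    refine le_of_mul_le_mul_left ?_ hP₁0
    linarith [m]
  have hBgA : B ≤ g * A := by
    rw [hgid, div_mul_eq_mul_div, le_div_iff₀ (by positivity)]
    linarith [k1]
  -- key inequality 2 : g * (C - A) ≤ E - B
  set t₁ := h₁^2/(1+h₁^2*P₁) with ht1def
  set t₂ := h₂^2/(1+h₂^2*P₁) with ht2def
  have ht₁ : 0 < t₁ := by rw [ht1def]; positivity
  have ht₂ : 0 < t₂ := by rw [ht2def]; positivity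
  have hs : 0 < P - P₁ := by linarith
  have ht21 : t₂ ≤ t₁ := by
    rw [ht1def, ht2def, div_le_div_iff₀ (by positivity) (by positivity)]
    have h9 : h₂^2*(1+h₁^2*P₁) - h₁^2*(1+h₂^2*P₁) = h₂^2 - h₁^2 := by ring
    linarith [h9, hsqle]
  have e1 : Real.log (1 + t₁*(P-P₁)) = C - A := by
    have h : 1 + t₁*(P-P₁) = (1+h₁^2*P)/(1+h₁^2*P₁) := by
      rw [ht1def, eq_div_iff (by positivity : (0:ℝ) < 1+h₁^2*P₁).ne']
      field_simp
      ring
    rw [h, Real.log_div (by positivity : (0:ℝ) < 1+h₁^2*P).ne'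
      (by positivity : (0:ℝ) < 1+h₁^2*P₁).ne', hCdef, hAdef]
  have e2 : Real.log (1 + t₂*(P-P₁)) = E - B := by
    have h : 1 + t₂*(P-P₁) = (1+h₂^2*P)/(1+h₂^2*P₁) := by
      rw [ht2def, eq_div_iff (by positivity : (0:ℝ) < 1+h₂^2*P₁).ne']
      field_simp
      ring
    rw [h, Real.log_div (by positivity : (0:ℝ) < 1+h₂^2*P).ne'
      (by positivity : (0:ℝ) < 1+h₂^2*P₁).ne', hEdef, hBdef]
  have k2 : t₂*(C-A) ≤ t₁*(E-B) := by
    have m := mono1 (v := t₂*(P-P₁)) (u := t₁*(P-P₁)) (by positivity)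
      (mul_le_mul_of_nonneg_right ht21 hs.le)
    rw [e1, e2] at m
    refine le_of_mul_le_mul_right ?_ hs
    linarith [m]
  have hgt : g = t₂ / t₁ := by
    rw [hgid, ht1def, ht2def, div_eq_div_iff (by positivity) (by positivity)]
    field_simp
  have hK2 : g * (C - A) ≤ E - B := by
    rw [hgt, div_mul_eq_mul_div, div_le_iff₀ ht₁]
    linarith [k2]
  -- assemble
  have hr₁ : r₁ = A/(2*L) := by rw [hr₁def, gam_eq]
  have hr₂ : r₂ = E/(2*L) - B/(2*L) := by
    rw [hr₂def, gam_eq, gam_eq]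
  have hR₁s : R₁s = C/(2*L) := by rw [hR₁sdef, gam_eq]
  have hR₂s : R₂s = E/(2*L) := by rw [hR₂sdef, gam_eq]
  have hnum : 0 < E - B + g*A := by linarith [mul_pos hg0 hA]
  have hDval : r₂ + g * r₁ = (E - B + g*A)/(2*L) := by
    rw [hr₁, hr₂]; ring
  have hbR : b * R₂s = E / (E - B + g*A) := by
    rw [hbdef, hDval, hR₂s]
    field_simp
  have haR : a * R₁s = (g*C) / (E - B + g*A) := by
    rw [hadef, hDval, hR₁s]
    field_simp
  refine ⟨⟨?_, ?_⟩, ?_, ?_⟩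
  · rw [hbR, sub_nonneg, div_le_one hnum]
    linarith [hBgA]
  · rw [hbR]
    have : 0 < E / (E - B + g*A) := div_pos hE hnum
    linarith
  · rw [haR]
    exact div_pos (mul_pos hg0 hC) hnum
  · rw [haR, div_le_one hnum]
    have hq : g*C - g*A = g*(C-A) := by ring
    linarith [hK2, hq]
end

section
/- Fix h₁ > h₂ > 0 and P > 0. Let C = (r₁, r₂) be a boundary point of the Gaussian BC capacity region corresponding to some P₁ ∈ (0, P), with tangent line a·r₁ + b·r₂ = 1 at C. Then a·R₁* + b·R₂* > 1, where R₁* = γ(h₁²P) and R₂* = γ(h₂²P); equivalently, w₁(C) = 1 − b·R₂* is strictly less than w₂(C) = a·R₁*. -/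
lemma gam_pos {x : ℝ} (hx : 0 < x) : 0 < gam x := by
  have : 0 < Real.logb 2 (1 + x) := Real.logb_pos one_lt_two (by linarith)
  unfold gam; linarith

lemma gam_lt {x y : ℝ} (hx : 0 ≤ x) (hxy : x < y) : gam x < gam y := by
  have : Real.logb 2 (1 + x) < Real.logb 2 (1 + y) :=
    Real.logb_lt_logb one_lt_two (by linarith) (by linarith)
  unfold gam; linarith

theorem corner_point_above_tangent (h₁ h₂ P P₁ : ℝ)
    (hh₂ : 0 < h₂) (hh : h₂ < h₁) (hP : 0 < P) (hP₁ : P₁ ∈ Set.Ioo (0 : ℝ) P) :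
    let r₁ := gam (h₁^2 * P₁)
    let r₂ := gam (h₂^2 * P) - gam (h₂^2 * P₁)
    let g := (1 / h₁^2 + P₁) / (1 / h₂^2 + P₁)
    let a := g / (r₂ + g * r₁)
    let b := 1 / (r₂ + g * r₁)
    let R₁s := gam (h₁^2 * P)
    let R₂s := gam (h₂^2 * P)
    a * R₁s + b * R₂s > 1 ∧ 1 - b * R₂s < a * R₁s := by
  obtain ⟨hP₁0, hP₁P⟩ := hP₁
  intro r₁ r₂ g a b R₁s R₂s
  have hh₁ : 0 < h₁ := lt_trans hh₂ hh
  have h1sq : 0 < h₁^2 := by positivity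
  have h2sq : 0 < h₂^2 := by positivity
  have hg : 0 < g := by
    have : 0 < 1 / h₁^2 + P₁ := by positivity
    have : 0 < 1 / h₂^2 + P₁ := by positivity
    positivity
  have hr₁ : 0 < r₁ := gam_pos (by positivity)
  have hr₂ : 0 < r₂ := by
    have := gam_lt (x := h₂^2 * P₁) (y := h₂^2 * P) (by positivity)
      (by nlinarith)
    simpa [r₂] using sub_pos.mpr this
  have hD : 0 < r₂ + g * r₁ := by positivity
  have hR₁ : r₁ < R₁s := gam_lt (by positivity) (by nlinarith)
  have hR₂ : r₂ < R₂s := by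
    have := gam_pos (x := h₂^2 * P₁) (by positivity)
    simp only [r₂, R₂s]; linarith
  have hnum : r₂ + g * r₁ < g * R₁s + R₂s := by nlinarith
  have hab : a * R₁s + b * R₂s = (g * R₁s + R₂s) / (r₂ + g * r₁) := by
    show g / (r₂ + g * r₁) * R₁s + 1 / (r₂ + g * r₁) * R₂s = _
    ring
  have hmain : a * R₁s + b * R₂s > 1 := by
    rw [hab]
    exact (one_lt_div hD).mpr hnum
  exact ⟨hmain, by linarith⟩
end

section
/- Let h₁ > h₂ > 0 and P > 0. For every point (r₁, r₂) on the boundary curve P₁ ↦ (γ(h₁²P₁), γ(h₂²P) − γ(h₂²P₁)) with P₁ ∈ (0,P), the full region {(r₁', r₂') : r₁' = γ(h₁²Q), r₂' ≤ γ(h₂²P) − γ(h₂²Q), Q ∈ [0,P]} lies weakly below the tangent line at (r₁, r₂): a·r₁' + b·r₂' ≤ 1 for all points in the region, where a, b are as given by the tangent formula. In other words, the Gaussian BC capacity region is convex and supported by these tangent lines. -/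
lemma key_log_ineq (A B s : ℝ) (hA : 0 < A) (hAB : A ≤ B) (hs : 0 < A + s) :
    A / B * (Real.log (A + s) - Real.log A) ≤ Real.log (B + s) - Real.log B := by
  have hB : 0 < B := lt_of_lt_of_le hA hAB
  have hBs : 0 < B + s := by linarith
  have hx : (0:ℝ) < (A + s) / A := div_pos hs hA
  have hw1 : (0:ℝ) ≤ A / B := by positivity
  have hw2 : (0:ℝ) ≤ 1 - A / B := by
    rw [sub_nonneg]
    exact (div_le_one hB).mpr hAB
  have hcc := strictConcaveOn_log_Ioi.concaveOn.2 (Set.mem_Ioi.mpr hx)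
      (Set.mem_Ioi.mpr one_pos) hw1 hw2 (by ring)
  rw [smul_eq_mul, smul_eq_mul, smul_eq_mul, smul_eq_mul, Real.log_one, mul_zero,
    add_zero] at hcc
  have h1 : A / B * ((A + s) / A) + (1 - A / B) * 1 = (B + s) / B := by
    field_simp
    ring
  rw [h1, Real.log_div hBs.ne' hB.ne'] at hcc
  rw [← Real.log_div hs.ne' hA.ne']
  exact hcc

lemma gam_diff (h t u : ℝ) (hh : 0 < h) (ht : 0 ≤ t) (hu : 0 ≤ u) :
    gam (h^2 * t) - gam (h^2 * u)
      = (Real.log (1/h^2 + t) - Real.log (1/h^2 + u)) / (2 * Real.log 2) := by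
  have h2 : (0:ℝ) < h^2 := by positivity
  have e1 : 1 + h^2 * t = h^2 * (1/h^2 + t) := by field_simp
  have e2 : 1 + h^2 * u = h^2 * (1/h^2 + u) := by field_simp
  unfold gam Real.logb
  rw [e1, e2, Real.log_mul h2.ne' (by positivity), Real.log_mul h2.ne' (by positivity)]
  ring

theorem tangent_line_supports_capacity_region (h₁ h₂ P : ℝ)
    (hh₂ : 0 < h₂) (hh : h₂ < h₁) (hP : 0 < P) :
    ∀ P₁ ∈ Set.Ioo (0 : ℝ) P,
      let r₁ := gam (h₁^2 * P₁)
      let r₂ := gam (h₂^2 * P) - gam (h₂^2 * P₁)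
      let g := (1 / h₁^2 + P₁) / (1 / h₂^2 + P₁)
      let a := g / (r₂ + g * r₁)
      let b := 1 / (r₂ + g * r₁)
      ∀ Q ∈ Set.Icc (0 : ℝ) P, ∀ r₂' : ℝ,
        0 ≤ r₂' → r₂' ≤ gam (h₂^2 * P) - gam (h₂^2 * Q) →
        a * gam (h₁^2 * Q) + b * r₂' ≤ 1 := by
  intro P₁ hP₁ r₁ r₂ g a b Q hQ r₂' hr₂' hub
  obtain ⟨hP₁0, hP₁P⟩ := hP₁
  obtain ⟨hQ0, hQP⟩ := hQ
  have hh₁ : 0 < h₁ := hh₂.trans hh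
  have hlog2 : (0:ℝ) < Real.log 2 := Real.log_pos (by norm_num)
  set A : ℝ := 1 / h₁^2 + P₁ with hAdef
  set B : ℝ := 1 / h₂^2 + P₁ with hBdef
  have hA : 0 < A := by positivity
  have hAB : A ≤ B := by
    have : 1 / h₁^2 ≤ 1 / h₂^2 := by
      apply one_div_le_one_div_of_le (by positivity)
      nlinarith
    simp only [hAdef, hBdef]
    linarith
  have hB : 0 < B := lt_of_lt_of_le hA hAB
  have hg : 0 < g := div_pos hA hB
  -- positivity of r₁ and r₂
  have hr₁ : 0 < r₁ := by
    have : (0:ℝ) < Real.logb 2 (1 + h₁^2 * P₁) :=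
      Real.logb_pos (by norm_num) (by nlinarith [sq_nonneg h₁, mul_pos (mul_pos hh₁ hh₁) hP₁0])
    simp only [r₁, gam]
    linarith
  have hr₂ : 0 < r₂ := by
    have hd := gam_diff h₂ P P₁ hh₂ hP.le hP₁0.le
    have : Real.log (1 / h₂^2 + P₁) < Real.log (1 / h₂^2 + P) :=
      Real.log_lt_log (by positivity) (by linarith)
    simp only [r₂]
    rw [hd]
    apply div_pos (by linarith) (by positivity)
  have hD : 0 < r₂ + g * r₁ := by positivity
  -- key inequality : g * (gam (h₁² Q) - r₁) ≤ gam (h₂² Q) - gam (h₂² P₁)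
  have hAs : 0 < A + (Q - P₁) := by
    have : (0:ℝ) < 1 / h₁^2 := by positivity
    simp only [hAdef]; linarith
  have hkey := key_log_ineq A B (Q - P₁) hA hAB hAs
  have eA : A + (Q - P₁) = 1 / h₁^2 + Q := by simp only [hAdef]; ring
  have eB : B + (Q - P₁) = 1 / h₂^2 + Q := by simp only [hBdef]; ring
  rw [eA, eB] at hkey
  have hd1 := gam_diff h₁ Q P₁ hh₁ hQ0 hP₁0.le
  have hd2 := gam_diff h₂ Q P₁ hh₂ hQ0 hP₁0.le
  have hmain : g * (gam (h₁^2 * Q) - gam (h₁^2 * P₁)) ≤ gam (h₂^2 * Q) - gam (h₂^2 * P₁) := by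
    have hc : (0:ℝ) < 2 * Real.log 2 := by positivity
    rw [hd1, hd2, mul_div_assoc']
    have hkey' : g * (Real.log (1 / h₁ ^ 2 + Q) - Real.log (1 / h₁ ^ 2 + P₁)) ≤
        Real.log (1 / h₂ ^ 2 + Q) - Real.log (1 / h₂ ^ 2 + P₁) := hkey
    exact div_le_div_of_nonneg_right hkey' hc.le |>.trans_eq rfl
  -- conclude
  have hX : 0 ≤ gam (h₁^2 * Q) := by
    have : (0:ℝ) ≤ Real.logb 2 (1 + h₁^2 * Q) :=
      Real.logb_nonneg (by norm_num) (by nlinarith)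
    simp only [gam]; linarith
  have hsum : g * gam (h₁^2 * Q) + r₂' ≤ r₂ + g * r₁ := by
    have er₂ : r₂ = gam (h₂^2 * P) - gam (h₂^2 * P₁) := rfl
    have er₁ : r₁ = gam (h₁^2 * P₁) := rfl
    have hexp : g * (gam (h₁^2 * Q) - gam (h₁^2 * P₁))
        = g * gam (h₁^2 * Q) - g * gam (h₁^2 * P₁) := by ring
    linarith [hmain, hexp, hub]
  have hab : a * gam (h₁^2 * Q) + b * r₂' = (g * gam (h₁^2 * Q) + r₂') / (r₂ + g * r₁) := by
    show g / (r₂ + g * r₁) * gam (h₁^2 * Q) + 1 / (r₂ + g * r₁) * r₂' = _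
    field_simp
  rw [hab, div_le_one hD]
  exact hsum
end
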